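/- (Monotonicity and geometric convergence of the throughput bounds, case p11 < p01.) Let 0 ≤ p11 < p01 ≤ 1 with p01 − p11 < 1, let p10 = 1 − p11, p00 = 1 − p01, ω_o = p01/(p01 + p10), and define: p10^{(2)} = p10·p00 + p11·p10; F = (1 − p01)·(1 − ω_o)·(1/(2 − p01) − p01·(p11 − p01)⁴/(1 − (p11 − p01)²·(1 − p01)²)); E = p10^{(2)}·(1 + p01) + p01·(1 − F); G = (1 − ω_o)·(1/(2 − p01) − p01·(p11 − p01)⁶/(1 − (p11 − p01)²·(1 − p01)²)); and for N ≥ 3, H(N) = (1 − ω_o)·(1/(2 − p01) − p01·(p11 − p01)^{2N−1}/(1 − (p11 − p01)²·(1 − p01)²)). Set LB(N) = 1 − p10^{(2)}/(E − p01·H(N)) and UB = 1 − p10^{(2)}/(E − p01·G), and assume E − p01·H(N) > 0 for all N ≥ 3 and E − p01·G > 0. Then for every N ≥ 3: LB(N) ≤ LB(N+1) and LB(N) ≤ UB; moreover LB(N) converges as N → ∞ to L* = 1 − p10^{(2)}/(E − p01·(1 − ω_o)/(2 − p01)), and there exists a constant K ≥ 0 such that |L* − LB(N)| ≤ K·(p01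 − p11)^{2N} for all N ≥ 3; i.e., the lower bound converges at geometric rate (p01 − p11)². -/

import Mathlib

set_option maxHeartbeats 1000000 in
/-- Monotonicity and geometric convergence of the throughput bounds for `p11 < p01`:
the lower bound `LB(N)` is nondecreasing in `N`, never exceeds the upper bound `UB`,
converges as `N → ∞` to `L* = 1 − p10^{(2)}/(E − p01·(1−ω_o)/(2−p01))`, and does so at
geometric rate `(p01 − p11)²`. -/
theorem throughput_bounds_monotone_geometric_neg
    (p01 p11 p10 p00 ωo : ℝ)
    (h0 : 0 ≤ p11) (h11 : p11 < p01) (h1 : p01 ≤ 1) (hx : p01 - p11 < 1)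
    (hp10 : p10 = 1 - p11) (hp00 : p00 = 1 - p01)
    (hωo : ωo = p01 / (p01 + p10))
    (p10two F E G : ℝ) (H LB : ℕ → ℝ) (UB Lstar : ℝ)
    (hp10two : p10two = p10 * p00 + p11 * p10)
    (hF : F = (1 - p01) * (1 - ωo) *
      (1 / (2 - p01) - p01 * (p11 - p01) ^ 4 / (1 - (p11 - p01) ^ 2 * (1 - p01) ^ 2)))
    (hE : E = p10two * (1 + p01) + p01 * (1 - F))
    (hG : G = (1 - ωo) *
      (1 / (2 - p01) - p01 * (p11 - p01) ^ 6 / (1 - (p11 - p01) ^ 2 * (1 - p01) ^ 2)))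
    (hH : ∀ N, 3 ≤ N → H N = (1 - ωo) *
      (1 / (2 - p01) -
        p01 * (p11 - p01) ^ (2 * N - 1) / (1 - (p11 - p01) ^ 2 * (1 - p01) ^ 2)))
    (hLB : ∀ N, 3 ≤ N → LB N = 1 - p10two / (E - p01 * H N))
    (hUB : UB = 1 - p10two / (E - p01 * G))
    (hposH : ∀ N, 3 ≤ N → 0 < E - p01 * H N)
    (hposG : 0 < E - p01 * G)
    (hLstar : Lstar = 1 - p10two / (E - p01 * ((1 - ωo) / (2 - p01)))) :
    (∀ N, 3 ≤ N → LB N ≤ LB (N + 1) ∧ LB N ≤ UB) ∧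
    Filter.Tendsto LB Filter.atTop (nhds Lstar) ∧
    ∃ K : ℝ, 0 ≤ K ∧ ∀ N, 3 ≤ N →
      |Lstar - LB N| ≤ K * (p01 - p11) ^ (2 * N) := by
  have hp01pos : 0 < p01 := lt_of_le_of_lt h0 h11
  set r : ℝ := p01 - p11 with hr
  have hr0 : 0 < r := sub_pos.2 h11
  have hr1 : r < 1 := hx
  have hp10pos : 0 < p10 := by rw [hp10]; linarith
  have hsum : 0 < p01 + p10 := by linarith
  have hωo1 : 1 - ωo = p10 / (p01 + p10) := by
    rw [hωo]; field_simp; ring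
  have hωonn : 0 ≤ 1 - ωo := by rw [hωo1]; positivity
  have h2p01 : 0 < 2 - p01 := by linarith
  set D : ℝ := 1 - (p11 - p01) ^ 2 * (1 - p01) ^ 2 with hD
  have hDpos : 0 < D := by
    have h2 : (1 - p01) ^ 2 ≤ 1 := by nlinarith
    have h3 : (p11 - p01) ^ 2 < 1 := by nlinarith
    have h4 : (p11 - p01) ^ 2 * (1 - p01) ^ 2 < 1 := by nlinarith [sq_nonneg (p11 - p01)]
    rw [hD]; linarith
  set A : ℝ := (1 - ωo) / (2 - p01) with hA
  set c : ℝ := (1 - ωo) * p01 / D with hc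
  have hcnn : 0 ≤ c := div_nonneg (mul_nonneg hωonn hp01pos.le) hDpos.le
  have hp2nn : 0 ≤ p10two := by
    rw [hp10two, hp00]
    have h5 : 0 ≤ 1 - p01 := by linarith
    have := mul_nonneg hp10pos.le h5
    have := mul_nonneg h0 hp10pos.le
    linarith
  -- H N = A + c * r ^ (2N-1)
  have hHc : ∀ N, 3 ≤ N → H N = A + c * r ^ (2 * N - 1) := by
    intro N hN
    have hodd : Odd (2 * N - 1) := ⟨N - 1, by omega⟩
    have hneg : p11 - p01 = -r := by rw [hr]; ring
    have hpow : (p11 - p01) ^ (2 * N - 1) = -(r ^ (2 * N - 1)) := by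
      rw [hneg, hodd.neg_pow]
    rw [hH N hN, hpow, hA, hc]
    ring
  have hGc : G = A - c * r ^ 6 := by
    have hpow : (p11 - p01) ^ 6 = r ^ 6 := by rw [hr]; ring
    rw [hG, hpow, hA, hc]; ring
  -- basic comparisons on H
  have hHge : ∀ N, 3 ≤ N → A ≤ H N := by
    intro N hN
    rw [hHc N hN]
    have : 0 ≤ c * r ^ (2 * N - 1) := mul_nonneg hcnn (pow_nonneg hr0.le _)
    linarith
  have hHmono : ∀ N, 3 ≤ N → H (N + 1) ≤ H N := by
    intro N hN
    rw [hHc N hN, hHc (N + 1) (by omega)]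
    have hple : r ^ (2 * (N + 1) - 1) ≤ r ^ (2 * N - 1) :=
      pow_le_pow_of_le_one hr0.le hr1.le (by omega)
    have := mul_le_mul_of_nonneg_left hple hcnn
    linarith
  have hH3 : ∀ N, 3 ≤ N → H N ≤ H 3 := by
    intro N hN
    rw [hHc N hN, hHc 3 le_rfl]
    have hple : r ^ (2 * N - 1) ≤ r ^ (2 * 3 - 1) :=
      pow_le_pow_of_le_one hr0.le hr1.le (by omega)
    have := mul_le_mul_of_nonneg_left hple hcnn
    linarith
  have hGH : ∀ N, 3 ≤ N → G ≤ H N := by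
    intro N hN
    have h6 : 0 ≤ c * r ^ 6 := mul_nonneg hcnn (pow_nonneg hr0.le _)
    have := hHge N hN
    rw [hGc]; linarith
  have hEA : 0 < E - p01 * A := by
    have h7 := hposH 3 le_rfl
    have h8 := hHge 3 le_rfl
    have h9 := mul_le_mul_of_nonneg_left h8 hp01pos.le
    linarith
  -- Part 1
  have part1 : ∀ N, 3 ≤ N → LB N ≤ LB (N + 1) ∧ LB N ≤ UB := by
    intro N hN
    have hxN := hposH N hN
    constructor
    · rw [hLB N hN, hLB (N + 1) (by omega)]
      have hle : E - p01 * H N ≤ E - p01 * H (N + 1) := by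
        have h9 := mul_le_mul_of_nonneg_left (hHmono N hN) hp01pos.le
        linarith
      gcongr
    · rw [hLB N hN, hUB]
      have hle : E - p01 * H N ≤ E - p01 * G := by
        have h9 := mul_le_mul_of_nonneg_left (hGH N hN) hp01pos.le
        linarith
      gcongr
  -- key geometric bound
  have hδ := hposH 3 le_rfl
  set δ : ℝ := E - p01 * H 3 with hδdef
  set K : ℝ := p10two * p01 * c / (r * δ * (E - p01 * A)) with hK
  have hKnn : 0 ≤ K :=
    div_nonneg (mul_nonneg (mul_nonneg hp2nn hp01pos.le) hcnn)
      (mul_pos (mul_pos hr0 hδ) hEA).le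
  have hkey : ∀ N, 3 ≤ N → |Lstar - LB N| ≤ K * r ^ (2 * N) := by
    intro N hN
    have hxN := hposH N hN
    have hδle : δ ≤ E - p01 * H N := by
      have h9 := mul_le_mul_of_nonneg_left (hH3 N hN) hp01pos.le
      rw [hδdef]; linarith
    have hua : E - p01 * H N ≤ E - p01 * A := by
      have h9 := mul_le_mul_of_nonneg_left (hHge N hN) hp01pos.le
      linarith
    have h1' : Lstar - LB N =
        p10two / (E - p01 * H N) - p10two / (E - p01 * A) := by
      rw [hLstar, hLB N hN]; ring
    have hge : 0 ≤ Lstar - LB N := by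
      rw [h1']
      have : p10two / (E - p01 * A) ≤ p10two / (E - p01 * H N) := by gcongr
      linarith
    have hdiff : Lstar - LB N =
        p10two * (p01 * c * r ^ (2 * N - 1)) /
          ((E - p01 * H N) * (E - p01 * A)) := by
      rw [h1', div_sub_div _ _ hxN.ne' hEA.ne']
      have hau : (E - p01 * A) - (E - p01 * H N) = p01 * c * r ^ (2 * N - 1) := by
        rw [hHc N hN]; ring
      rw [div_eq_div_iff (mul_pos hxN hEA).ne' (mul_pos hxN hEA).ne']
      linear_combination p10two * (E - p01 * H N) * (E - p01 * A) * hau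
    have hbound : p10two * (p01 * c * r ^ (2 * N - 1)) /
          ((E - p01 * H N) * (E - p01 * A)) ≤
        p10two * (p01 * c * r ^ (2 * N - 1)) / (δ * (E - p01 * A)) := by
      have hnum : 0 ≤ p10two * (p01 * c * r ^ (2 * N - 1)) :=
        mul_nonneg hp2nn (mul_nonneg (mul_nonneg hp01pos.le hcnn)
          (pow_nonneg hr0.le _))
      gcongr
    have hKr : K * r ^ (2 * N) =
        p10two * (p01 * c * r ^ (2 * N - 1)) / (δ * (E - p01 * A)) := by
      have h2n : r ^ (2 * N) = r ^ (2 * N - 1) * r := by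
        rw [← pow_succ]; congr 1; omega
      rw [hK, h2n]
      field_simp
    rw [abs_of_nonneg hge, hdiff, hKr]
    exact hbound
  refine ⟨part1, ?_, ⟨K, hKnn, hkey⟩⟩
  -- convergence
  have hr2 : r ^ 2 < 1 := by nlinarith
  have htend0 : Filter.Tendsto (fun N : ℕ => K * (r ^ 2) ^ N)
      Filter.atTop (nhds 0) := by
    have := tendsto_pow_atTop_nhds_zero_of_lt_one (by positivity : (0:ℝ) ≤ r ^ 2) hr2
    simpa using this.const_mul K
  have hsq : Filter.Tendsto (fun N => LB N - Lstar) Filter.atTop (nhds 0) := by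
    apply squeeze_zero_norm' (a := fun N : ℕ => K * (r ^ 2) ^ N) _ htend0
    filter_upwards [Filter.eventually_ge_atTop 3] with N hN
    have := hkey N hN
    rw [← pow_mul]
    calc ‖LB N - Lstar‖ = |Lstar - LB N| := by
          rw [Real.norm_eq_abs, abs_sub_comm]
      _ ≤ K * r ^ (2 * N) := this
  have := hsq.add_const Lstar
  simpa using this
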